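/- arXiv:2603.28739 — 3 statements merged into one kernel-verified Lean document; each statement's English description precedes it below -/
import Mathlib

section
/- Let the auxiliary tasks be weighted by λ_1,…,λ_K ≥ 0 with Λ := Σ_{k=1}^K λ_k > 0, λ'_k := λ_k/Λ, and w*_aux := Σ_{k=1}^K λ'_k w*_k. Then E_K < E_0 holds if and only if ((Σ_{k=1}^K (λ'_k)² σ_k² − σ_m²)·d/(N−d−1) + ||Σ_x^{1/2}(w*_aux − w*_m)||²)·Λ < 2 σ_m²·d/(N−d−1), where E_K = ((σ_m² + Σ_k λ_k² σ_k²)/(1+Λ)²)·d/(N−d−1) + (Λ/(1+Λ))²·||Σ_x^{1/2}(w*_aux − w*_m)||² + σ_m² and E_0 = σ_m²·d/(N−d−1) + σ_m². -/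
open Matrix

noncomputable section

namespace Stmt1

/-- The quadratic form `vᵀ Σ v`, which equals `‖Σ^{1/2} v‖²` for positive semidefinite `Σ`. -/
def quadForm {d : ℕ} (Sigx : Matrix (Fin d) (Fin d) ℝ) (v : Fin d → ℝ) : ℝ :=
  v ⬝ᵥ (Sigx *ᵥ v)

/-- The closed-form expected main-task generalization error `E_K` of the weighted
least-squares estimator with auxiliary task weights `lam`, true task models `wm`, `wk`,
noise standard deviations `σm`, `σa`, and feature covariance `Sigx`. -/
def EKform (N d K : ℕ) (Sigx : Matrix (Fin d) (Fin d) ℝ) (wm : Fin d → ℝ)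
    (wk : Fin K → Fin d → ℝ) (σm : ℝ) (σa : Fin K → ℝ) (lam : Fin K → ℝ) : ℝ :=
  ((σm ^ 2 + ∑ k, lam k ^ 2 * σa k ^ 2) / (1 + ∑ k, lam k) ^ 2) *
      ((d : ℝ) / ((N : ℝ) - (d : ℝ) - 1)) +
    ((∑ k, lam k) / (1 + ∑ k, lam k)) ^ 2 *
      quadForm Sigx ((1 / ∑ k, lam k) • (∑ k, lam k • wk k) - wm) +
    σm ^ 2

/-- The closed-form expected main-task generalization error `E_0` of ordinary least
squares trained on the main task alone. -/
def E0form (N d : ℕ) (σm : ℝ) : ℝ :=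
  σm ^ 2 * ((d : ℝ) / ((N : ℝ) - (d : ℝ) - 1)) + σm ^ 2

/-- Corollary 3.2: with `Λ = ∑ λ_k > 0` and `λ'_k = λ_k / Λ`,
auxiliary learning is beneficial, i.e. `E_K < E_0`, if and only if
`((∑ (λ'_k)² σ_k² − σ_m²)·d/(N−d−1) + ‖Σ_x^{1/2}(w*_aux − w*_m)‖²)·Λ < 2 σ_m²·d/(N−d−1)`. -/
theorem aux_helps_iff
    (N d K : ℕ) (hN : d + 1 < N)
    (Sigx : Matrix (Fin d) (Fin d) ℝ) (hSig : Sigx.PosDef)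
    (wm : Fin d → ℝ) (wk : Fin K → Fin d → ℝ)
    (σm : ℝ) (hσm : 0 < σm) (σa : Fin K → ℝ) (hσa : ∀ k, 0 < σa k)
    (lam : Fin K → ℝ) (hlam : ∀ k, 0 ≤ lam k) (hΛ : 0 < ∑ k, lam k) :
    EKform N d K Sigx wm wk σm σa lam < E0form N d σm ↔
      ((∑ k, (lam k / ∑ k', lam k') ^ 2 * σa k ^ 2 - σm ^ 2) *
            ((d : ℝ) / ((N : ℝ) - (d : ℝ) - 1)) +
          quadForm Sigx ((∑ k, (lam k / ∑ k', lam k') • wk k) - wm)) * (∑ k, lam k) <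
        2 * σm ^ 2 * ((d : ℝ) / ((N : ℝ) - (d : ℝ) - 1)) := by
  set Λ := ∑ k, lam k with hΛdef
  have hΛ0 : Λ ≠ 0 := ne_of_gt hΛ
  have h1Λ : (0:ℝ) < 1 + Λ := by linarith
  -- identify the quadForm arguments
  have harg : (∑ k, (lam k / Λ) • wk k) - wm = (1 / Λ) • (∑ k, lam k • wk k) - wm := by
    congr 1
    rw [Finset.smul_sum]
    refine Finset.sum_congr rfl fun k _ => ?_
    rw [smul_smul]
    congr 1
    field_simp
  rw [harg]
  set Q := quadForm Sigx ((1 / Λ) • (∑ k, lam k • wk k) - wm) with hQ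
  set D := (d : ℝ) / ((N : ℝ) - (d : ℝ) - 1) with hD
  set S := ∑ k, lam k ^ 2 * σa k ^ 2 with hS
  have hsum : ∑ k, (lam k / Λ) ^ 2 * σa k ^ 2 = S / Λ ^ 2 := by
    rw [hS, Finset.sum_div]
    refine Finset.sum_congr rfl fun k _ => ?_
    field_simp
  rw [hsum]
  have hid : E0form N d σm - EKform N d K Sigx wm wk σm σa lam =
      (2 * σm ^ 2 * D - ((S / Λ ^ 2 - σm ^ 2) * D + Q) * Λ) * (Λ / (1 + Λ) ^ 2) := by
    unfold E0form EKform
    rw [← hQ, ← hD, ← hS, ← hΛdef]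
    field_simp
    ring
  rw [← sub_pos, hid, ← sub_pos (b := ((S / Λ ^ 2 - σm ^ 2) * D + Q) * Λ)]
  exact mul_pos_iff_of_pos_right (by positivity)

end Stmt1
end
end

section
/- For α in the simplex Δ_K = {α ∈ R^K : α_k ≥ 0, Σ_k α_k = 1}, define f(α) = (d/(N−d−1)) Σ_{k=1}^K α_k² σ_k² + δ(α)^T Σ_x δ(α), where δ(α) = Σ_{k=1}^K α_k w*_k − w*_m. Let λ'* ∈ argmin_{α ∈ Δ_K} f(α) and suppose f(λ'*) > 0; set Λ* = σ_m²·(d/(N−d−1))·(1/f(λ'*)) and λ*_k = Λ* λ'*_k. Then the weights (λ*_1,…,λ*_K) minimize E_K(λ) = ((σ_m² + Σ_k λ_k² σ_k²)/(1+Σ_k λ_k)²)·d/(N−d−1) + ((Σ_k λ_k)/(1+Σ_k λ_k))²·||Σ_x^{1/2}((Σ_k λ_k w*_k)/(Σ_k λ_k) − w*_m)||² + σ_m² over all λ ∈ R^K with λ_k ≥ 0 and Σ_k λ_k > 0. Moreover, when K = 1, λ'* = 1 and λ* = Λ*. -/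
open Matrix

noncomputable section

namespace Stmt2

/-- The quadratic form `vᵀ Σ v`, which equals `‖Σ^{1/2} v‖²` for positive semidefinite `Σ`. -/
def quadForm {d : ℕ} (Sigx : Matrix (Fin d) (Fin d) ℝ) (v : Fin d → ℝ) : ℝ :=
  v ⬝ᵥ (Sigx *ᵥ v)

/-- The closed-form expected main-task generalization error `E_K(λ)`. -/
def EKform (N d K : ℕ) (Sigx : Matrix (Fin d) (Fin d) ℝ) (wm : Fin d → ℝ)
    (wk : Fin K → Fin d → ℝ) (σm : ℝ) (σa : Fin K → ℝ) (lam : Fin K → ℝ) : ℝ :=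
  ((σm ^ 2 + ∑ k, lam k ^ 2 * σa k ^ 2) / (1 + ∑ k, lam k) ^ 2) *
      ((d : ℝ) / ((N : ℝ) - (d : ℝ) - 1)) +
    ((∑ k, lam k) / (1 + ∑ k, lam k)) ^ 2 *
      quadForm Sigx ((1 / ∑ k, lam k) • (∑ k, lam k • wk k) - wm) +
    σm ^ 2

/-- Membership in the simplex `Δ_K`. -/
def memSimplex {K : ℕ} (α : Fin K → ℝ) : Prop :=
  (∀ k, 0 ≤ α k) ∧ ∑ k, α k = 1

/-- The objective `f(α) = (d/(N−d−1)) ∑ α_k² σ_k² + δ(α)ᵀ Σ_x δ(α)`,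
where `δ(α) = ∑ α_k w*_k − w*_m`. -/
def fObj (N d K : ℕ) (Sigx : Matrix (Fin d) (Fin d) ℝ) (wm : Fin d → ℝ)
    (wk : Fin K → Fin d → ℝ) (σa : Fin K → ℝ) (α : Fin K → ℝ) : ℝ :=
  ((d : ℝ) / ((N : ℝ) - (d : ℝ) - 1)) * (∑ k, α k ^ 2 * σa k ^ 2) +
    quadForm Sigx ((∑ k, α k • wk k) - wm)

lemma key_ineq (A F Fs S Ls : ℝ) (hA : 0 < A) (hFs : 0 < Fs) (hF : Fs ≤ F)
    (hS : 0 < S) (hLs : Ls = A / Fs) :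
    (A + Ls ^ 2 * Fs) / (1 + Ls) ^ 2 ≤ (A + S ^ 2 * F) / (1 + S) ^ 2 := by
  have hAFs : (0:ℝ) < A + Fs := by linarith
  have h1 : (A + Ls ^ 2 * Fs) / (1 + Ls) ^ 2 = A * Fs / (A + Fs) := by
    subst hLs
    rw [div_eq_div_iff (by positivity) hAFs.ne']
    field_simp
    ring
  rw [h1, div_le_div_iff₀ hAFs (by positivity)]
  nlinarith [sq_nonneg (A - S * Fs),
    mul_nonneg (mul_nonneg (sq_nonneg S) (sub_nonneg.2 hF)) hAFs.le]

lemma EK_rewrite (N d K : ℕ) (Sigx : Matrix (Fin d) (Fin d) ℝ) (wm : Fin d → ℝ)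
    (wk : Fin K → Fin d → ℝ) (σm : ℝ) (σa : Fin K → ℝ) (lam : Fin K → ℝ)
    (hS : 0 < ∑ k, lam k) :
    EKform N d K Sigx wm wk σm σa lam =
      (σm ^ 2 * ((d : ℝ) / ((N : ℝ) - (d : ℝ) - 1)) +
        (∑ k, lam k) ^ 2 *
          fObj N d K Sigx wm wk σa (fun k => lam k / ∑ j, lam j)) /
        (1 + ∑ k, lam k) ^ 2 + σm ^ 2 := by
  have hS0 : (∑ k, lam k) ≠ 0 := ne_of_gt hS
  have h1S : (1 + ∑ k, lam k) ≠ 0 := by positivity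
  have hvec : (∑ k, (lam k / ∑ j, lam j) • wk k)
      = (1 / ∑ k, lam k) • ∑ k, lam k • wk k := by
    rw [Finset.smul_sum]
    refine Finset.sum_congr rfl fun k _ => ?_
    rw [smul_smul, one_div, inv_mul_eq_div]
  have hsum2 : (∑ k, (lam k / ∑ j, lam j) ^ 2 * σa k ^ 2)
      = (∑ k, lam k ^ 2 * σa k ^ 2) / (∑ k, lam k) ^ 2 := by
    rw [Finset.sum_div]
    refine Finset.sum_congr rfl fun k _ => ?_
    rw [div_pow]; ring
  simp only [EKform, fObj, hvec, hsum2]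
  generalize (d : ℝ) / ((N : ℝ) - (d : ℝ) - 1) = c
  field_simp
  ring

/-- Theorem 3.2: the re-parameterized weights
`λ'* ∈ argmin_{α ∈ Δ_K} f(α)`, `Λ* = σ_m²·(d/(N−d−1))/f(λ'*)`, `λ*_k = Λ* λ'*_k`
globally minimize `E_K` over all nonnegative weights with positive total mass;
moreover `λ'* = 1` and `λ* = Λ*` when `K = 1`. -/
theorem optimal_weights
    (N d K : ℕ) (hN : d + 1 < N)
    (Sigx : Matrix (Fin d) (Fin d) ℝ) (hSig : Sigx.PosDef)
    (wm : Fin d → ℝ) (wk : Fin K → Fin d → ℝ)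
    (σm : ℝ) (hσm : 0 < σm) (σa : Fin K → ℝ) (hσa : ∀ k, 0 < σa k)
    (lam' : Fin K → ℝ) (hmem : memSimplex lam')
    (hargmin : ∀ α : Fin K → ℝ, memSimplex α →
      fObj N d K Sigx wm wk σa lam' ≤ fObj N d K Sigx wm wk σa α)
    (hfpos : 0 < fObj N d K Sigx wm wk σa lam')
    (Λstar : ℝ)
    (hΛstar : Λstar = σm ^ 2 * ((d : ℝ) / ((N : ℝ) - (d : ℝ) - 1)) *
      (1 / fObj N d K Sigx wm wk σa lam'))
    (lamstar : Fin K → ℝ) (hlamstar : ∀ k, lamstar k = Λstar * lam' k) :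
    (∀ lam : Fin K → ℝ, (∀ k, 0 ≤ lam k) → 0 < ∑ k, lam k →
      EKform N d K Sigx wm wk σm σa lamstar ≤ EKform N d K Sigx wm wk σm σa lam) ∧
    (K = 1 → ∀ k, lam' k = 1 ∧ lamstar k = Λstar) := by
  have hNd : (0:ℝ) < (N:ℝ) - (d:ℝ) - 1 := by
    have : ((d:ℝ) + 1) < (N:ℝ) := by exact_mod_cast hN
    linarith
  have hd : 0 < d := by
    rcases Nat.eq_zero_or_pos d with hd0 | hd
    · subst hd0
      simp [fObj, quadForm, dotProduct] at hfpos
    · exact hd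
  have hc : (0:ℝ) < (d : ℝ) / ((N : ℝ) - (d : ℝ) - 1) :=
    div_pos (by exact_mod_cast hd) hNd
  set c : ℝ := (d : ℝ) / ((N : ℝ) - (d : ℝ) - 1) with hcdef
  set Fs : ℝ := fObj N d K Sigx wm wk σa lam' with hFsdef
  have hA : (0:ℝ) < σm ^ 2 * c := by positivity
  have hΛeq : Λstar = σm ^ 2 * c / Fs := by rw [hΛstar, mul_one_div]
  have hΛpos : 0 < Λstar := by rw [hΛeq]; exact div_pos hA hfpos
  have hsum_star : (∑ k, lamstar k) = Λstar := by
    simp only [hlamstar]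
    rw [← Finset.mul_sum, hmem.2, mul_one]
  have hαstar : (fun k => lamstar k / Λstar) = lam' := by
    funext k
    rw [hlamstar k, mul_comm, mul_div_assoc, div_self hΛpos.ne', mul_one]
  have hEKstar : EKform N d K Sigx wm wk σm σa lamstar =
      (σm ^ 2 * c + Λstar ^ 2 * Fs) / (1 + Λstar) ^ 2 + σm ^ 2 := by
    rw [EK_rewrite N d K Sigx wm wk σm σa lamstar (hsum_star ▸ hΛpos), hsum_star, hαstar,
      ← hcdef, ← hFsdef]
  constructor
  · intro lam hnn hS
    have hmemα : memSimplex (fun k => lam k / ∑ j, lam j) := by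
      constructor
      · exact fun k => div_nonneg (hnn k) hS.le
      · rw [← Finset.sum_div, div_self hS.ne']
    have hF : Fs ≤ fObj N d K Sigx wm wk σa (fun k => lam k / ∑ j, lam j) :=
      hargmin _ hmemα
    rw [hEKstar, EK_rewrite N d K Sigx wm wk σm σa lam hS]
    exact add_le_add_left
      (key_ineq (σm ^ 2 * c) _ Fs (∑ k, lam k) Λstar hA hfpos hF hS hΛeq) _
  · intro hK
    subst hK
    intro k
    have h := hmem.2
    rw [Fin.sum_univ_one] at h
    have hk : k = 0 := Subsingleton.elim k 0
    subst hk
    exact ⟨h, by rw [hlamstar, h, mul_one]⟩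

end Stmt2
end
end

section
/- Let S, Z ∈ R^{m×n}, M = S + Z, and q ∈ {1,…,rank(S)}. Let P_U = U_{:,q}U_{:,q}^T be the orthogonal projection onto the span of the top q left singular vectors of S, and let P̂_U = Û_{:,q}Û_{:,q}^T be the orthogonal projection onto the span of any choice of top q left singular vectors of M. If (σ_q(S) − σ_{q+1}(S))/||Z|| ≥ r for some r > 1, then ||P̂_U − P_U|| ≤ ||Z||/(σ_q(S) − σ_{q+1}(S) − ||Z||) ≤ 1/(r − 1), where ||·|| is the spectral norm and σ_j(·) the j-th largest singular value. -/
open Matrix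

noncomputable section

namespace Stmt14

/-- Euclidean norm of a vector in `ℝ^n`. -/
def norm2 {n : ℕ} (v : Fin n → ℝ) : ℝ := Real.sqrt (∑ i, v i ^ 2)

/-- Spectral norm (`ℓ₂` operator norm) of a real matrix. -/
def spec {m n : ℕ} (A : Matrix (Fin m) (Fin n) ℝ) : ℝ :=
  sSup {c : ℝ | ∃ x : Fin n → ℝ, norm2 x = 1 ∧ c = norm2 (A *ᵥ x)}

/-- `i`-th largest singular value (1-indexed), via the Eckart–Young–Mirsky
characterization `σ_i(A) = inf { ‖A − B‖ : rank B ≤ i − 1 }`. -/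
def singVal {m n : ℕ} (A : Matrix (Fin m) (Fin n) ℝ) (i : ℕ) : ℝ :=
  sInf {c : ℝ | ∃ B : Matrix (Fin m) (Fin n) ℝ, B.rank < i ∧ c = spec (A - B)}

/-- Rectangular diagonal matrix with diagonal entries `σs 0 ≥ σs 1 ≥ …`. -/
def diagMat (m n : ℕ) (σs : ℕ → ℝ) : Matrix (Fin m) (Fin n) ℝ :=
  Matrix.of fun i j => if (i : ℕ) = (j : ℕ) then σs (i : ℕ) else 0

/-- Orthogonal projection `U_{:,q} U_{:,q}ᵀ` onto the span of the first `q` columns of `U`. -/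
def projTop (m q : ℕ) (U : Matrix (Fin m) (Fin m) ℝ) : Matrix (Fin m) (Fin m) ℝ :=
  Matrix.of fun i i' => ∑ jj : Fin m, if (jj : ℕ) < q then U i jj * U i' jj else 0

-- embed plain vector into EuclideanSpace
def toE {n : ℕ} (v : Fin n → ℝ) : EuclideanSpace ℝ (Fin n) := (WithLp.equiv 2 _).symm v

lemma norm2_eq_norm {n : ℕ} (v : Fin n → ℝ) : norm2 v = ‖toE v‖ := by
  rw [EuclideanSpace.norm_eq, norm2]
  congr 1
  refine Finset.sum_congr rfl fun i _ => ?_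
  rw [Real.norm_eq_abs, sq_abs]; rfl

def clm {m n : ℕ} (A : Matrix (Fin m) (Fin n) ℝ) :
    EuclideanSpace ℝ (Fin n) →L[ℝ] EuclideanSpace ℝ (Fin m) :=
  LinearMap.toContinuousLinearMap (Matrix.toEuclideanLin A)

lemma clm_apply {m n : ℕ} (A : Matrix (Fin m) (Fin n) ℝ) (v : Fin n → ℝ) :
    clm A (toE v) = toE (A *ᵥ v) := rfl

lemma norm2_mulVec {m n : ℕ} (A : Matrix (Fin m) (Fin n) ℝ) (v : Fin n → ℝ) :
    norm2 (A *ᵥ v) = ‖clm A (toE v)‖ := by rw [clm_apply, norm2_eq_norm]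

end Stmt14

namespace Stmt14

lemma spec_eq {m n : ℕ} (A : Matrix (Fin m) (Fin n) ℝ) : spec A = ‖clm A‖ := by
  rcases Nat.eq_zero_or_pos n with hn | hn
  · subst hn
    have h1 : spec A = 0 := by
      have : {c : ℝ | ∃ x : Fin 0 → ℝ, norm2 x = 1 ∧ c = norm2 (A *ᵥ x)} = ∅ := by
        ext c; simp only [Set.mem_setOf_eq, Set.mem_empty_iff_false, iff_false]
        rintro ⟨x, hx, -⟩
        simp [norm2] at hx
      rw [spec, this, Real.sSup_empty]
    have h2 : clm A = 0 := by
      ext x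
      have : x = 0 := Subsingleton.elim x 0
      simp [this]
    rw [h1, h2, norm_zero]
  · apply le_antisymm
    · apply Real.sSup_le _ (norm_nonneg _)
      rintro c ⟨x, hx, rfl⟩
      rw [norm2_mulVec]
      calc ‖clm A (toE x)‖ ≤ ‖clm A‖ * ‖toE x‖ := (clm A).le_opNorm _
        _ = ‖clm A‖ := by rw [← norm2_eq_norm, hx, mul_one]
    · have hbdd : BddAbove {c : ℝ | ∃ x : Fin n → ℝ, norm2 x = 1 ∧ c = norm2 (A *ᵥ x)} := by
        refine ⟨‖clm A‖, ?_⟩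
        rintro c ⟨x, hx, rfl⟩
        rw [norm2_mulVec]
        calc ‖clm A (toE x)‖ ≤ ‖clm A‖ * ‖toE x‖ := (clm A).le_opNorm _
          _ = ‖clm A‖ := by rw [← norm2_eq_norm, hx, mul_one]
      have hmem : ∀ x : Fin n → ℝ, norm2 x = 1 → norm2 (A *ᵥ x) ≤ spec A := fun x hx =>
        le_csSup hbdd ⟨x, hx, rfl⟩
      have hnonneg : 0 ≤ spec A := by
        have : norm2 (fun i => if i = ⟨0, hn⟩ then (1:ℝ) else 0) = 1 := by
          rw [norm2_eq_norm]
          have : toE (fun i => if i = ⟨0, hn⟩ then (1:ℝ) else 0)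
              = EuclideanSpace.single (⟨0, hn⟩ : Fin n) (1:ℝ) := by
            ext i; simp [toE, EuclideanSpace.single, Pi.single_apply]
          rw [this, EuclideanSpace.norm_single, norm_one]
        calc (0:ℝ) ≤ norm2 (A *ᵥ _) := Real.sqrt_nonneg _
          _ ≤ spec A := hmem _ this
      apply (clm A).opNorm_le_bound hnonneg
      intro x
      rcases eq_or_ne x 0 with rfl | hx
      · simp
      · have hxn : ‖x‖ ≠ 0 := norm_ne_zero_iff.mpr hx
        have hunit : norm2 (WithLp.equiv 2 _ ((‖x‖)⁻¹ • x)) = 1 := by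
          rw [norm2_eq_norm]
          show ‖(‖x‖)⁻¹ • x‖ = 1
          rw [norm_smul, norm_inv, norm_norm, inv_mul_cancel₀ hxn]
        have := hmem _ hunit
        rw [norm2_mulVec] at this
        have he : toE (WithLp.equiv 2 _ ((‖x‖)⁻¹ • x)) = (‖x‖)⁻¹ • x := rfl
        rw [he, _root_.map_smul, norm_smul, norm_inv, norm_norm] at this
        calc ‖clm A x‖ = ‖x‖ * ((‖x‖)⁻¹ * ‖clm A x‖) := by field_simp
          _ ≤ ‖x‖ * spec A := by
              apply mul_le_mul_of_nonneg_left this (norm_nonneg _)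
          _ = spec A * ‖x‖ := mul_comm _ _

end Stmt14

namespace Stmt14
variable {m n p : ℕ}

lemma spec_nonneg (A : Matrix (Fin m) (Fin n) ℝ) : 0 ≤ spec A := by
  rw [spec_eq]; exact norm_nonneg _

lemma norm2_nonneg (v : Fin n → ℝ) : 0 ≤ norm2 v := Real.sqrt_nonneg _

lemma norm2_mulVec_le (A : Matrix (Fin m) (Fin n) ℝ) (v : Fin n → ℝ) :
    norm2 (A *ᵥ v) ≤ spec A * norm2 v := by
  rw [norm2_mulVec, spec_eq, norm2_eq_norm]
  exact (clm A).le_opNorm _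

lemma spec_le_bound {A : Matrix (Fin m) (Fin n) ℝ} {c : ℝ} (hc : 0 ≤ c)
    (h : ∀ v : Fin n → ℝ, norm2 (A *ᵥ v) ≤ c * norm2 v) : spec A ≤ c := by
  rw [spec_eq]
  apply (clm A).opNorm_le_bound hc
  intro x
  have := h (WithLp.equiv 2 _ x)
  rwa [norm2_mulVec, norm2_eq_norm] at this
  -- note toE (equiv x) = x definitionally

lemma clm_mul (A : Matrix (Fin m) (Fin n) ℝ) (B : Matrix (Fin n) (Fin p) ℝ) :
    clm (A * B) = (clm A).comp (clm B) := by
  apply ContinuousLinearMap.ext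
  intro x
  show toE ((A * B) *ᵥ (WithLp.equiv 2 _ x)) = toE (A *ᵥ (B *ᵥ (WithLp.equiv 2 _ x)))
  rw [Matrix.mulVec_mulVec]

lemma spec_mul_le (A : Matrix (Fin m) (Fin n) ℝ) (B : Matrix (Fin n) (Fin p) ℝ) :
    spec (A * B) ≤ spec A * spec B := by
  rw [spec_eq, spec_eq, spec_eq, clm_mul]
  exact ContinuousLinearMap.opNorm_comp_le _ _

lemma spec_add_le (A B : Matrix (Fin m) (Fin n) ℝ) : spec (A + B) ≤ spec A + spec B := by
  rw [spec_eq, spec_eq, spec_eq]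
  have : clm (A + B) = clm A + clm B := by
    apply ContinuousLinearMap.ext; intro x
    show toE ((A + B) *ᵥ _) = toE (A *ᵥ _) + toE (B *ᵥ _)
    rw [Matrix.add_mulVec]; rfl
  rw [this]; exact norm_add_le _ _

lemma spec_neg (A : Matrix (Fin m) (Fin n) ℝ) : spec (-A) = spec A := by
  rw [spec_eq, spec_eq]
  have : clm (-A) = -(clm A) := by
    apply ContinuousLinearMap.ext; intro x
    show toE ((-A) *ᵥ _) = -(toE (A *ᵥ _))
    rw [Matrix.neg_mulVec]; rfl
  rw [this, norm_neg]

lemma spec_sub_le (A B : Matrix (Fin m) (Fin n) ℝ) : spec (A - B) ≤ spec A + spec B := by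
  rw [sub_eq_add_neg]
  calc spec (A + -B) ≤ spec A + spec (-B) := spec_add_le _ _
    _ = spec A + spec B := by rw [spec_neg]

lemma spec_zero : spec (0 : Matrix (Fin m) (Fin n) ℝ) = 0 := by
  rw [spec_eq]
  have : clm (0 : Matrix (Fin m) (Fin n) ℝ) = 0 := by
    apply ContinuousLinearMap.ext; intro x
    show toE ((0 : Matrix (Fin m) (Fin n) ℝ) *ᵥ _) = 0
    rw [Matrix.zero_mulVec]; rfl
  rw [this, norm_zero]

lemma spec_transpose (A : Matrix (Fin m) (Fin n) ℝ) : spec Aᵀ = spec A := by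
  rw [spec_eq, spec_eq]
  have h2 : clm Aᵀ = ContinuousLinearMap.adjoint (clm A) := by
    apply ContinuousLinearMap.coe_injective
    show (Matrix.toEuclideanLin Aᵀ : _ →ₗ[ℝ] _) = _
    rw [← Matrix.conjTranspose_eq_transpose_of_trivial,
      Matrix.toEuclideanLin_conjTranspose_eq_adjoint, LinearMap.adjoint_eq_toCLM_adjoint]
    rfl
  rw [h2]
  exact LinearIsometryEquiv.norm_map ContinuousLinearMap.adjoint _

end Stmt14

namespace Stmt14
variable {m n p : ℕ}

lemma norm2_sq (v : Fin n → ℝ) : norm2 v ^ 2 = ∑ i, v i ^ 2 :=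
  Real.sq_sqrt (Finset.sum_nonneg fun i _ => sq_nonneg _)

lemma sum_sq_eq_dot (v : Fin n → ℝ) : ∑ i, v i ^ 2 = v ⬝ᵥ v := by
  simp [dotProduct, sq]

lemma norm2_isometry {U : Matrix (Fin m) (Fin p) ℝ} (hU : Uᵀ * U = 1) (v : Fin p → ℝ) :
    norm2 (U *ᵥ v) = norm2 v := by
  unfold norm2
  congr 1
  rw [sum_sq_eq_dot, sum_sq_eq_dot, Matrix.dotProduct_mulVec]
  have : (U *ᵥ v) ᵥ* U = (Uᵀ * U) *ᵥ v := by
    rw [← Matrix.mulVec_transpose, Matrix.mulVec_mulVec]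
  rw [this, hU, Matrix.one_mulVec, dotProduct_comm]

lemma spec_mulL {U : Matrix (Fin m) (Fin p) ℝ} (hU : Uᵀ * U = 1)
    (A : Matrix (Fin p) (Fin n) ℝ) : spec (U * A) = spec A := by
  apply le_antisymm
  · apply spec_le_bound (spec_nonneg A)
    intro v
    rw [← Matrix.mulVec_mulVec, norm2_isometry hU]
    exact norm2_mulVec_le A v
  · apply spec_le_bound (spec_nonneg _)
    intro v
    rw [← norm2_isometry hU (A *ᵥ v), Matrix.mulVec_mulVec]
    exact norm2_mulVec_le _ v

lemma spec_le_one_of_isometry {U : Matrix (Fin n) (Fin n) ℝ} (hU : Uᵀ * U = 1) :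
    spec U ≤ 1 := by
  apply spec_le_bound zero_le_one
  intro v
  rw [norm2_isometry hU, one_mul]

lemma spec_mulR {V : Matrix (Fin n) (Fin n) ℝ} (hV : Vᵀ * V = 1)
    (A : Matrix (Fin m) (Fin n) ℝ) : spec (A * Vᵀ) = spec A := by
  have hVVt : V * Vᵀ = 1 := mul_eq_one_comm.mp hV
  have hVt : Vᵀᵀ * Vᵀ = 1 := by rw [Matrix.transpose_transpose]; exact hVVt
  apply le_antisymm
  · calc spec (A * Vᵀ) ≤ spec A * spec Vᵀ := spec_mul_le _ _
      _ ≤ spec A * 1 := by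
          exact mul_le_mul_of_nonneg_left (spec_le_one_of_isometry hVt) (spec_nonneg _)
      _ = spec A := mul_one _
  · calc spec A = spec (A * Vᵀ * V) := by rw [Matrix.mul_assoc, hV, Matrix.mul_one]
      _ ≤ spec (A * Vᵀ) * spec V := spec_mul_le _ _
      _ ≤ spec (A * Vᵀ) * 1 := by
          exact mul_le_mul_of_nonneg_left (spec_le_one_of_isometry hV) (spec_nonneg _)
      _ = spec (A * Vᵀ) := mul_one _

lemma spec_sandwich {U : Matrix (Fin m) (Fin m) ℝ} {V : Matrix (Fin n) (Fin n) ℝ}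
    (hU : Uᵀ * U = 1) (hV : Vᵀ * V = 1) (B : Matrix (Fin m) (Fin n) ℝ) :
    spec (U * B * Vᵀ) = spec B := by
  rw [Matrix.mul_assoc, spec_mulL hU, spec_mulR hV]

end Stmt14

namespace Stmt14
variable {m n p : ℕ}

lemma diagMat_mulVec (f : ℕ → ℝ) (v : Fin n → ℝ) (i : Fin m) :
    (diagMat m n f *ᵥ v) i = if h : (i : ℕ) < n then f i * v ⟨i, h⟩ else 0 := by
  unfold diagMat Matrix.mulVec dotProduct
  simp only [Matrix.of_apply]
  split
  · next h =>
      rw [Finset.sum_eq_single (⟨(i : ℕ), h⟩ : Fin n)]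
      · simp
      · intro j _ hj
        rw [if_neg, zero_mul]
        intro hc
        exact hj (by apply Fin.ext; exact hc.symm)
      · intro hj; exact absurd (Finset.mem_univ _) hj
  · next h =>
      apply Finset.sum_eq_zero
      intro j _
      rw [if_neg, zero_mul]
      intro hc
      exact h (hc ▸ j.isLt)

lemma sum_dite_le (g : Fin n → ℝ) (hg : ∀ j, 0 ≤ g j) :
    ∑ i : Fin m, (if h : (i : ℕ) < n then g ⟨i, h⟩ else 0) ≤ ∑ j, g j := by
  have key : ∀ (k : ℕ), ∑ i : Fin k, (if h : (i : ℕ) < n then g ⟨i, h⟩ else 0)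
      = ∑ i ∈ Finset.range k, (if h : i < n then g ⟨i, h⟩ else 0) :=
    fun k => Fin.sum_univ_eq_sum_range (fun i => if h : i < n then g ⟨i, h⟩ else 0) k
  rw [key m]
  have h2 : ∑ j : Fin n, g j = ∑ i ∈ Finset.range n, (if h : i < n then g ⟨i, h⟩ else 0) := by
    rw [← key n]
    apply Finset.sum_congr rfl
    intro j _
    rw [dif_pos j.isLt]
  rw [h2]
  have hsub : ∑ i ∈ Finset.range m, (if h : i < n then g ⟨i, h⟩ else 0)
      = ∑ i ∈ (Finset.range m).filter (· < n), (if h : i < n then g ⟨i, h⟩ else 0) := by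
    symm
    apply Finset.sum_subset (Finset.filter_subset _ _)
    intro i hi hni
    rw [dif_neg]
    intro hc
    exact hni (Finset.mem_filter.mpr ⟨hi, hc⟩)
  rw [hsub]
  apply Finset.sum_le_sum_of_subset_of_nonneg
  · intro i hi
    exact Finset.mem_range.mpr (Finset.mem_filter.mp hi).2
  · intro i _ _
    split
    · exact hg _
    · exact le_refl 0

lemma spec_diagMat_le {f : ℕ → ℝ} {c : ℝ} (h : ∀ k, |f k| ≤ c) :
    spec (diagMat m n f) ≤ c := by
  have hc : 0 ≤ c := le_trans (abs_nonneg _) (h 0)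
  apply spec_le_bound hc
  intro v
  have hle : ∑ i : Fin m, ((diagMat m n f *ᵥ v) i) ^ 2 ≤ c ^ 2 * ∑ j, v j ^ 2 := by
    have step : ∀ i : Fin m, ((diagMat m n f *ᵥ v) i) ^ 2
        ≤ c ^ 2 * (if h : (i : ℕ) < n then (v ⟨i, h⟩) ^ 2 else 0) := by
      intro i
      rw [diagMat_mulVec]
      split
      · next hi =>
          rw [mul_pow]
          apply mul_le_mul_of_nonneg_right _ (sq_nonneg _)
          calc (f i) ^ 2 = |f (i:ℕ)| ^ 2 := (sq_abs _).symm
            _ ≤ c ^ 2 := by apply pow_le_pow_left₀ (abs_nonneg _) (h _)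
      · simp
    calc ∑ i : Fin m, ((diagMat m n f *ᵥ v) i) ^ 2
        ≤ ∑ i : Fin m, c ^ 2 * (if h : (i : ℕ) < n then (v ⟨i, h⟩) ^ 2 else 0) :=
          Finset.sum_le_sum fun i _ => step i
      _ = c ^ 2 * ∑ i : Fin m, (if h : (i : ℕ) < n then (v ⟨i, h⟩) ^ 2 else 0) := by
          rw [Finset.mul_sum]
      _ ≤ c ^ 2 * ∑ j, v j ^ 2 := by
          apply mul_le_mul_of_nonneg_left _ (sq_nonneg _)
          exact sum_dite_le _ (fun j => sq_nonneg _)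
  unfold norm2
  calc Real.sqrt (∑ i, ((diagMat m n f *ᵥ v) i) ^ 2)
      ≤ Real.sqrt (c ^ 2 * ∑ j, v j ^ 2) := Real.sqrt_le_sqrt hle
    _ = c * Real.sqrt (∑ j, v j ^ 2) := by
        rw [Real.sqrt_mul (sq_nonneg _), Real.sqrt_sq hc]

end Stmt14

namespace Stmt14
variable {m n p : ℕ}

lemma norm2_diagMat_mulVec_ge {f : ℕ → ℝ} {c : ℝ} (hc : 0 ≤ c)
    (hall : ∀ j, j < p → c ≤ f j) (hpm : p ≤ m) (v : Fin p → ℝ) :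
    c * norm2 v ≤ norm2 (diagMat m p f *ᵥ v) := by
  have key : c ^ 2 * ∑ j, v j ^ 2 ≤ ∑ i : Fin m, ((diagMat m p f *ᵥ v) i) ^ 2 := by
    have hrw : ∑ i : Fin m, ((diagMat m p f *ᵥ v) i) ^ 2
        = ∑ i ∈ Finset.range m, (if h : i < p then (f i * v ⟨i, h⟩) ^ 2 else 0) := by
      rw [← Fin.sum_univ_eq_sum_range (fun i => if h : i < p then (f i * v ⟨i, h⟩) ^ 2 else 0) m]
      apply Finset.sum_congr rfl
      intro i _
      rw [diagMat_mulVec]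
      split
      · rfl
      · simp
    rw [hrw]
    have h1 : ∑ i ∈ Finset.range p, (if h : i < p then (f i * v ⟨i, h⟩) ^ 2 else 0)
        ≤ ∑ i ∈ Finset.range m, (if h : i < p then (f i * v ⟨i, h⟩) ^ 2 else 0) := by
      apply Finset.sum_le_sum_of_subset_of_nonneg
      · exact Finset.range_subset_range.mpr hpm
      · intro i _ _
        split
        · exact sq_nonneg _
        · exact le_refl 0
    refine le_trans ?_ h1
    have h2 : ∑ i ∈ Finset.range p, (if h : i < p then (f i * v ⟨i, h⟩) ^ 2 else 0)
        = ∑ j : Fin p, (f j * v j) ^ 2 := by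
      rw [← Fin.sum_univ_eq_sum_range (fun i => if h : i < p then (f i * v ⟨i, h⟩) ^ 2 else 0) p]
      apply Finset.sum_congr rfl
      intro j _
      rw [dif_pos j.isLt]
    rw [h2, Finset.mul_sum]
    apply Finset.sum_le_sum
    intro j _
    rw [mul_pow]
    apply mul_le_mul_of_nonneg_right _ (sq_nonneg _)
    apply pow_le_pow_left₀ hc (hall j j.isLt)
  unfold norm2
  calc c * Real.sqrt (∑ j, v j ^ 2) = Real.sqrt (c ^ 2 * ∑ j, v j ^ 2) := by
        rw [Real.sqrt_mul (sq_nonneg _), Real.sqrt_sq hc]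
    _ ≤ _ := Real.sqrt_le_sqrt key

lemma diagMat_mul_diagMat (f g : ℕ → ℝ) :
    diagMat m n f * diagMat n p g = diagMat m p (fun k => if k < n then f k * g k else 0) := by
  ext i j
  unfold diagMat
  simp only [Matrix.mul_apply, Matrix.of_apply]
  rcases Nat.lt_or_ge (i : ℕ) n with hi | hi
  · rw [Finset.sum_eq_single (⟨(i : ℕ), hi⟩ : Fin n)]
    · by_cases hij : (i : ℕ) = (j : ℕ)
      · have hjn : (j : ℕ) < n := by omega
        simp [hij, hi, hjn]
      · simp [hij, hi]
    · intro b _ hb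
      rw [if_neg, zero_mul]
      intro hc; exact hb (by apply Fin.ext; exact hc.symm)
    · intro hb; exact absurd (Finset.mem_univ _) hb
  · have hz : (∑ k : Fin n, (if (i : ℕ) = (k : ℕ) then f (i : ℕ) else 0)
        * (if (k : ℕ) = (j : ℕ) then g (k : ℕ) else 0)) = 0 := by
      apply Finset.sum_eq_zero
      intro b _
      rw [if_neg, zero_mul]
      intro hc
      have := b.isLt
      omega
    rw [hz]
    symm
    split
    · rw [if_neg (by omega : ¬ (i : ℕ) < n)]
    · rfl

lemma diagMat_transpose (f : ℕ → ℝ) : (diagMat m n f)ᵀ = diagMat n m f := by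
  ext i j
  unfold diagMat
  simp only [Matrix.transpose_apply, Matrix.of_apply]
  by_cases h : (j : ℕ) = (i : ℕ)
  · rw [if_pos h, if_pos h.symm, h]
  · rw [if_neg h, if_neg (fun hc => h hc.symm)]

lemma one_eq_diagMat : (1 : Matrix (Fin m) (Fin m) ℝ) = diagMat m m (fun _ => 1) := by
  ext i j
  unfold diagMat
  rw [Matrix.one_apply, Matrix.of_apply]
  by_cases h : i = j
  · rw [if_pos h, if_pos (by rw [h])]
  · rw [if_neg h, if_neg (fun hc => h (Fin.ext hc))]

lemma diagMat_ext {f g : ℕ → ℝ} (h : ∀ k, k < m → k < n → f k = g k) :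
    diagMat m n f = diagMat m n g := by
  ext i j
  unfold diagMat
  simp only [Matrix.of_apply]
  split
  · next hij => exact h i i.isLt (hij ▸ j.isLt)
  · rfl

lemma projTop_eq (q : ℕ) (U : Matrix (Fin m) (Fin m) ℝ) :
    projTop m q U = U * diagMat m m (fun k => if k < q then 1 else 0) * Uᵀ := by
  ext i i'
  unfold projTop diagMat
  simp only [Matrix.mul_apply, Matrix.of_apply, Matrix.transpose_apply]
  apply Finset.sum_congr rfl
  intro x _
  have hinner : ∑ x1 : Fin m, U i x1 * (if (x1 : ℕ) = (x : ℕ) then (if (x1 : ℕ) < q then (1:ℝ) else 0) else 0)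
      = U i x * (if (x : ℕ) < q then (1:ℝ) else 0) := by
    rw [Finset.sum_eq_single x]
    · rw [if_pos rfl]
    · intro b _ hb
      rw [if_neg (fun hc => hb (Fin.ext hc)), mul_zero]
    · intro h; exact absurd (Finset.mem_univ _) h
  rw [hinner]
  split
  · rw [mul_one]
  · rw [mul_zero, zero_mul]

end Stmt14


namespace Stmt14
variable {m n p : ℕ}

lemma singVal_set_nonempty (A : Matrix (Fin m) (Fin n) ℝ) {i : ℕ} (hi : 0 < i) :
    {c : ℝ | ∃ B : Matrix (Fin m) (Fin n) ℝ, B.rank < i ∧ c = spec (A - B)}.Nonempty :=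
  ⟨spec (A - 0), 0, by rw [Matrix.rank_zero]; exact hi, rfl⟩

lemma singVal_set_bddBelow (A : Matrix (Fin m) (Fin n) ℝ) (i : ℕ) :
    BddBelow {c : ℝ | ∃ B : Matrix (Fin m) (Fin n) ℝ, B.rank < i ∧ c = spec (A - B)} :=
  ⟨0, by rintro c ⟨B, _, rfl⟩; exact spec_nonneg _⟩

lemma singVal_nonneg (A : Matrix (Fin m) (Fin n) ℝ) (i : ℕ) : 0 ≤ singVal A i :=
  Real.sInf_nonneg (by rintro c ⟨B, _, rfl⟩; exact spec_nonneg _)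

lemma singVal_le_spec_sub {A B : Matrix (Fin m) (Fin n) ℝ} {i : ℕ} (hB : B.rank < i) :
    singVal A i ≤ spec (A - B) :=
  csInf_le (singVal_set_bddBelow A i) ⟨B, hB, rfl⟩

lemma singVal_pert (S Z : Matrix (Fin m) (Fin n) ℝ) {i : ℕ} (hi : 0 < i) :
    singVal (S + Z) i ≤ singVal S i + spec Z := by
  rw [← sub_le_iff_le_add]
  apply le_csInf (singVal_set_nonempty S hi)
  rintro c ⟨B, hB, rfl⟩
  rw [sub_le_iff_le_add]
  calc singVal (S + Z) i ≤ spec (S + Z - B) := singVal_le_spec_sub hB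
    _ ≤ spec (S - B) + spec Z := by
        have h : S + Z - B = (S - B) + Z := by abel
        rw [h]; exact spec_add_le _ _

/-- Easy direction of Eckart–Young: `σ_{k+1}(A) ≤ σs k` for an SVD of `A`. -/
lemma singVal_le_sigma {A : Matrix (Fin m) (Fin n) ℝ}
    {U : Matrix (Fin m) (Fin m) ℝ} {V : Matrix (Fin n) (Fin n) ℝ} {σs : ℕ → ℝ}
    (hU : Uᵀ * U = 1) (hV : Vᵀ * V = 1)
    (hmono : ∀ a b : ℕ, a ≤ b → σs b ≤ σs a) (hnn : ∀ a, 0 ≤ σs a)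
    (hSVD : A = U * diagMat m n σs * Vᵀ) (k : ℕ) :
    singVal A (k + 1) ≤ σs k := by
  set B := U * diagMat m n (fun t => if t < k then σs t else 0) * Vᵀ with hBdef
  have hrank : B.rank < k + 1 := by
    rw [Nat.lt_succ_iff]
    have hfac : diagMat m n (fun t => if t < k then σs t else 0)
        = diagMat m k σs * diagMat k n (fun _ => 1) := by
      rw [diagMat_mul_diagMat]
      apply diagMat_ext
      intro t _ _
      by_cases h : t < k <;> simp [h]
    calc B.rank ≤ (U * diagMat m n (fun t => if t < k then σs t else 0)).rank :=
          Matrix.rank_mul_le_left _ _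
      _ ≤ (diagMat m n (fun t => if t < k then σs t else 0)).rank := Matrix.rank_mul_le_right _ _
      _ = (diagMat m k σs * diagMat k n (fun _ => 1)).rank := by rw [hfac]
      _ ≤ (diagMat m k σs).rank := Matrix.rank_mul_le_left _ _
      _ ≤ Fintype.card (Fin k) := Matrix.rank_le_card_width _
      _ = k := Fintype.card_fin k
  have hdiff : A - B = U * diagMat m n (fun t => if t < k then 0 else σs t) * Vᵀ := by
    rw [hSVD, hBdef, ← Matrix.sub_mul, ← Matrix.mul_sub]
    congr 2
    ext i j
    unfold diagMat
    simp only [Matrix.sub_apply, Matrix.of_apply]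
    split
    · split <;> simp
    · simp
  calc singVal A (k + 1) ≤ spec (A - B) := singVal_le_spec_sub hrank
    _ = spec (diagMat m n (fun t => if t < k then 0 else σs t)) := by
        rw [hdiff]; exact spec_sandwich hU hV _
    _ ≤ σs k := by
        apply spec_diagMat_le
        intro t
        by_cases h : t < k
        · simp only [h, if_true]; rw [abs_zero]; exact hnn k
        · simp only [h, if_false]; rw [abs_of_nonneg (hnn t)]
          exact hmono k t (by omega)

lemma norm2_pos {v : Fin n → ℝ} (hv : v ≠ 0) : 0 < norm2 v := by
  rw [norm2_eq_norm]
  rw [norm_pos_iff]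
  intro h
  exact hv ((WithLp.equiv 2 (Fin n → ℝ)).symm.injective (h.trans (by simp)))

/-- Hard direction of Eckart–Young: `σs k ≤ σ_{k+1}(A)`, provided `k < m`, `k < n`. -/
lemma sigma_le_singVal {A : Matrix (Fin m) (Fin n) ℝ}
    {U : Matrix (Fin m) (Fin m) ℝ} {V : Matrix (Fin n) (Fin n) ℝ} {σs : ℕ → ℝ}
    (hU : Uᵀ * U = 1) (hV : Vᵀ * V = 1)
    (hmono : ∀ a b : ℕ, a ≤ b → σs b ≤ σs a) (hnn : ∀ a, 0 ≤ σs a)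
    (hSVD : A = U * diagMat m n σs * Vᵀ) {k : ℕ} (hkm : k < m) (hkn : k < n) :
    σs k ≤ singVal A (k + 1) := by
  apply le_csInf (singVal_set_nonempty A (Nat.succ_pos k))
  rintro c ⟨B, hB, rfl⟩
  rw [Nat.lt_succ_iff] at hB
  -- the matrix of the top k+1 right singular vectors
  set C : Matrix (Fin n) (Fin (k + 1)) ℝ :=
    Matrix.of (fun i j => V i (Fin.castLE hkn j)) with hCdef
  have hCtC : Cᵀ * C = 1 := by
    ext a b
    have : (Cᵀ * C) a b = (Vᵀ * V) (Fin.castLE hkn a) (Fin.castLE hkn b) := by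
      simp [Matrix.mul_apply, hCdef]
    rw [this, hV, Matrix.one_apply, Matrix.one_apply]
    by_cases h : a = b
    · rw [if_pos (by rw [h]), if_pos h]
    · rw [if_neg (fun hc => h (by
        apply Fin.ext
        have := congrArg Fin.val hc
        simpa using this)), if_neg h]
  have hCrank : C.rank = k + 1 := by
    apply le_antisymm
    · calc C.rank ≤ Fintype.card (Fin (k + 1)) := Matrix.rank_le_card_width _
        _ = k + 1 := Fintype.card_fin _
    · calc k + 1 = Fintype.card (Fin (k + 1)) := (Fintype.card_fin _).symm
        _ = (1 : Matrix (Fin (k + 1)) (Fin (k + 1)) ℝ).rank := Matrix.rank_one.symm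
        _ = (Cᵀ * C).rank := by rw [hCtC]
        _ ≤ C.rank := Matrix.rank_mul_le_right _ _
  set W : Submodule ℝ (Fin n → ℝ) := LinearMap.range C.mulVecLin with hWdef
  set K : Submodule ℝ (Fin n → ℝ) := LinearMap.ker B.mulVecLin with hKdef
  have hW : Module.finrank ℝ W = k + 1 := hCrank
  have hK : B.rank + Module.finrank ℝ K = n := by
    have := LinearMap.finrank_range_add_finrank_ker B.mulVecLin
    rwa [Module.finrank_fin_fun] at this
  have hinf : 0 < Module.finrank ℝ (W ⊓ K : Submodule ℝ (Fin n → ℝ)) := by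
    have hsum := Submodule.finrank_sup_add_finrank_inf_eq W K
    have hsup : Module.finrank ℝ (W ⊔ K : Submodule ℝ (Fin n → ℝ)) ≤ n := by
      have := Submodule.finrank_le (W ⊔ K : Submodule ℝ (Fin n → ℝ))
      rwa [Module.finrank_fin_fun] at this
    omega
  have hne : (W ⊓ K : Submodule ℝ (Fin n → ℝ)) ≠ ⊥ := by
    intro h
    rw [← Submodule.finrank_eq_zero.mpr h] at hinf
    exact lt_irrefl _ hinf
  obtain ⟨x, hx, hxne⟩ := (Submodule.ne_bot_iff _).mp hne
  obtain ⟨hxW, hxK⟩ := hx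
  obtain ⟨cvec, hcvec⟩ := hxW
  rw [Matrix.mulVecLin_apply] at hcvec
  have hBx : B *ᵥ x = 0 := hxK
  have hnormx : norm2 x = norm2 cvec := by
    rw [← hcvec]; exact norm2_isometry hCtC cvec
  have hAx : σs k * norm2 x ≤ norm2 (A *ᵥ x) := by
    have h1 : A *ᵥ x = U *ᵥ (diagMat m n σs *ᵥ (Vᵀ *ᵥ x)) := by
      rw [hSVD, ← Matrix.mulVec_mulVec, ← Matrix.mulVec_mulVec]
    have hvc : Vᵀ * C = diagMat n (k + 1) (fun _ => (1:ℝ)) := by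
      ext a b
      have hab : (Vᵀ * C) a b = (Vᵀ * V) a (Fin.castLE hkn b) := by
        simp [Matrix.mul_apply, hCdef]
      rw [hab, hV, Matrix.one_apply]
      unfold diagMat
      rw [Matrix.of_apply]
      by_cases h : (a : ℕ) = (b : ℕ)
      · rw [if_pos (Fin.ext (by simpa using h)), if_pos h]
      · rw [if_neg (fun hc => h (by simpa using congrArg Fin.val hc)), if_neg h]
    have h2 : Vᵀ *ᵥ x = diagMat n (k + 1) (fun _ => (1:ℝ)) *ᵥ cvec := by
      rw [← hcvec, Matrix.mulVec_mulVec, hvc]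
    have h3 : diagMat m n σs *ᵥ (Vᵀ *ᵥ x) = diagMat m (k + 1) σs *ᵥ cvec := by
      rw [h2, Matrix.mulVec_mulVec, diagMat_mul_diagMat,
        show (diagMat m (k+1) fun t => if t < n then σs t * 1 else 0) = diagMat m (k+1) σs from
          diagMat_ext (fun t _ ht => by rw [if_pos (by omega), mul_one])]
    rw [h1, norm2_isometry hU, h3, hnormx]
    exact norm2_diagMat_mulVec_ge (hnn k) (fun j hj => hmono j k (by omega)) (by omega) cvec
  have hfinal : σs k * norm2 x ≤ spec (A - B) * norm2 x := by
    calc σs k * norm2 x ≤ norm2 (A *ᵥ x) := hAx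
      _ = norm2 ((A - B) *ᵥ x) := by rw [Matrix.sub_mulVec, hBx, sub_zero]
      _ ≤ spec (A - B) * norm2 x := norm2_mulVec_le _ _
  exact le_of_mul_le_mul_right hfinal (norm2_pos hxne)

end Stmt14

namespace Stmt14
variable {m n p q : ℕ}

lemma mid_cancel {b c : ℕ} {V : Matrix (Fin b) (Fin b) ℝ} (h : Vᵀ * V = 1)
    (X : Matrix (Fin b) (Fin c) ℝ) : Vᵀ * (V * X) = X := by
  rw [← Matrix.mul_assoc, h, Matrix.one_mul]

lemma mid_cancel' {b c : ℕ} {V : Matrix (Fin b) (Fin b) ℝ} (h : Vᵀ * V = 1)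
    (X : Matrix (Fin b) (Fin c) ℝ) : V * (Vᵀ * X) = X := by
  rw [← Matrix.mul_assoc, mul_eq_one_comm.mp h, Matrix.one_mul]

lemma diagMat_zero : diagMat m n (fun _ => (0:ℝ)) = 0 := by
  ext i j; unfold diagMat; simp

lemma projTop_transpose (q : ℕ) (U : Matrix (Fin m) (Fin m) ℝ) :
    (projTop m q U)ᵀ = projTop m q U := by
  ext i j
  unfold projTop
  simp only [Matrix.transpose_apply, Matrix.of_apply]
  apply Finset.sum_congr rfl
  intro x _
  split
  · ring
  · rfl

lemma projTop_idem {U : Matrix (Fin m) (Fin m) ℝ} (hU : Uᵀ * U = 1) (q : ℕ) :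
    projTop m q U * projTop m q U = projTop m q U := by
  rw [projTop_eq]
  simp only [Matrix.mul_assoc]
  rw [mid_cancel hU]
  rw [← Matrix.mul_assoc (diagMat m m fun k => if k < q then (1:ℝ) else 0), diagMat_mul_diagMat]
  congr 2
  apply diagMat_ext
  intro t ht _
  rw [if_pos ht]
  split <;> simp

lemma one_sub_projTop {U : Matrix (Fin m) (Fin m) ℝ} (hU : Uᵀ * U = 1) (q : ℕ) :
    1 - projTop m q U = U * diagMat m m (fun k => if k < q then 0 else 1) * Uᵀ := by
  have hUUt : U * Uᵀ = 1 := mul_eq_one_comm.mp hU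
  rw [projTop_eq]
  have h1 : (1 : Matrix (Fin m) (Fin m) ℝ) = U * diagMat m m (fun _ => 1) * Uᵀ := by
    rw [← one_eq_diagMat, Matrix.mul_one, hUUt]
  nth_rewrite 1 [h1]
  rw [← Matrix.sub_mul, ← Matrix.mul_sub]
  congr 2
  ext i j
  unfold diagMat
  simp only [Matrix.sub_apply, Matrix.of_apply]
  split
  · split <;> simp
  · simp

lemma spec_projTop_le_one {U : Matrix (Fin m) (Fin m) ℝ} (hU : Uᵀ * U = 1) (q : ℕ) :
    spec (projTop m q U) ≤ 1 := by
  rw [projTop_eq, spec_sandwich hU hU]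
  apply spec_diagMat_le
  intro t
  split <;> simp

lemma spec_one_sub_projTop_le_one {U : Matrix (Fin m) (Fin m) ℝ} (hU : Uᵀ * U = 1) (q : ℕ) :
    spec (1 - projTop m q U) ≤ 1 := by
  rw [one_sub_projTop hU, spec_sandwich hU hU]
  apply spec_diagMat_le
  intro t
  split <;> simp

end Stmt14

namespace Stmt14

/-- Core Wedin-type inequality:
`σs (q-1) * ‖(I - P̂) P‖ ≤ σsh q * ‖(I - Q̂) Q‖ + ‖Z‖`. -/
lemma claimA {m n q : ℕ} {S Z M : Matrix (Fin m) (Fin n) ℝ} (hM : M = S + Z)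
    {U : Matrix (Fin m) (Fin m) ℝ} {V : Matrix (Fin n) (Fin n) ℝ} {σs : ℕ → ℝ}
    (hU : Uᵀ * U = 1) (hV : Vᵀ * V = 1)
    (hmono : ∀ a b : ℕ, a ≤ b → σs b ≤ σs a) (hnn : ∀ a, 0 ≤ σs a)
    (hSVD : S = U * diagMat m n σs * Vᵀ)
    {Uh : Matrix (Fin m) (Fin m) ℝ} {Vh : Matrix (Fin n) (Fin n) ℝ} {σsh : ℕ → ℝ}
    (hUh : Uhᵀ * Uh = 1) (hVh : Vhᵀ * Vh = 1)
    (hmonoh : ∀ a b : ℕ, a ≤ b → σsh b ≤ σsh a) (hnnh : ∀ a, 0 ≤ σsh a)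
    (hSVDh : M = Uh * diagMat m n σsh * Vhᵀ)
    (hq1 : 1 ≤ q) (hqn : q ≤ n) (hσpos : 0 < σs (q - 1)) :
    σs (q - 1) * spec ((1 - projTop m q Uh) * projTop m q U)
      ≤ σsh q * spec ((1 - projTop n q Vh) * projTop n q V) + spec Z := by
  set σ := σs (q - 1) with hσdef
  have hσt : ∀ t, t < q → σ ≤ σs t := fun t ht => hmono t (q - 1) (by omega)
  set P := projTop m q U with hPdef
  set Ph := projTop m q Uh with hPhdef
  set Q := projTop n q V with hQdef
  set Qh := projTop n q Vh with hQhdef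
  set F : Matrix (Fin n) (Fin m) ℝ :=
    diagMat n m (fun t => if t < q then (σs t)⁻¹ else 0) with hFdef
  set N : Matrix (Fin n) (Fin m) ℝ := V * F * Uᵀ with hNdef
  -- S * N = P
  have hSN : S * N = P := by
    rw [hSVD, hNdef, hPdef, projTop_eq]
    simp only [Matrix.mul_assoc]
    rw [mid_cancel hV (F * Uᵀ), ← Matrix.mul_assoc (diagMat m n σs) F Uᵀ, diagMat_mul_diagMat]
    congr 2
    apply diagMat_ext
    intro t htm _
    by_cases htq : t < q
    · rw [if_pos (by omega : t < n), if_pos htq, if_pos htq,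
        mul_inv_cancel₀ (ne_of_gt (lt_of_lt_of_le hσpos (hσt t htq)))]
    · rw [if_neg htq]
      split
      · rw [mul_zero]
      · rfl
  -- Q * N = N
  have hQN : Q * N = N := by
    rw [hQdef, projTop_eq, hNdef]
    simp only [Matrix.mul_assoc]
    rw [mid_cancel hV (F * Uᵀ),
      ← Matrix.mul_assoc (diagMat n n fun k => if k < q then (1:ℝ) else 0) F Uᵀ,
      diagMat_mul_diagMat]
    congr 2
    apply diagMat_ext
    intro t htn _
    rw [if_pos htn]
    by_cases htq : t < q
    · rw [if_pos htq, if_pos htq, one_mul]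
    · rw [if_neg htq, if_neg htq, zero_mul]
  -- spec N ≤ σ⁻¹
  have hspecN : spec N ≤ σ⁻¹ := by
    rw [hNdef, spec_sandwich hV hU]
    apply spec_diagMat_le
    intro t
    by_cases htq : t < q
    · rw [if_pos htq, abs_of_nonneg (inv_nonneg.mpr (hnn t))]
      exact inv_anti₀ hσpos (hσt t htq)
    · rw [if_neg htq, abs_zero]
      exact inv_nonneg.mpr (le_of_lt hσpos)
  -- (1 - Ph) * M = Uh * diagMat (masked σsh) * Vhᵀ
  have h1PM : (1 - Ph) * M
      = Uh * diagMat m n (fun t => if t < q then 0 else σsh t) * Vhᵀ := by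
    rw [hPhdef, one_sub_projTop hUh, hSVDh]
    simp only [Matrix.mul_assoc]
    rw [mid_cancel hUh (diagMat m n σsh * Vhᵀ),
      ← Matrix.mul_assoc (diagMat m m fun k => if k < q then (0:ℝ) else 1) (diagMat m n σsh) Vhᵀ,
      diagMat_mul_diagMat]
    congr 2
    apply diagMat_ext
    intro t htm _
    rw [if_pos htm]
    by_cases htq : t < q
    · rw [if_pos htq, if_pos htq, zero_mul]
    · rw [if_neg htq, if_neg htq, one_mul]
  -- (1 - Ph) * M * Qh = 0
  have h1PMQh : (1 - Ph) * M * Qh = 0 := by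
    rw [h1PM, hQhdef, projTop_eq]
    simp only [Matrix.mul_assoc]
    rw [mid_cancel hVh ((diagMat n n fun k => if k < q then (1:ℝ) else 0) * Vhᵀ),
      ← Matrix.mul_assoc (diagMat m n fun t => if t < q then 0 else σsh t)
        (diagMat n n fun k => if k < q then (1:ℝ) else 0) Vhᵀ,
      diagMat_mul_diagMat]
    have hz : (diagMat m n fun k =>
        if k < n then (if k < q then 0 else σsh k) * (if k < q then (1:ℝ) else 0) else 0) = 0 := by
      rw [← diagMat_zero]
      apply diagMat_ext
      intro t _ _
      by_cases htq : t < q <;> simp [htq]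
    rw [hz, Matrix.zero_mul, Matrix.mul_zero]
  -- spec ((1-Ph) * M) ≤ σsh q
  have hspec1PM : spec ((1 - Ph) * M) ≤ σsh q := by
    rw [h1PM, spec_sandwich hUh hVh]
    apply spec_diagMat_le
    intro t
    by_cases htq : t < q
    · rw [if_pos htq, abs_zero]; exact hnnh q
    · rw [if_neg htq, abs_of_nonneg (hnnh t)]
      exact hmonoh q t (by omega)
  -- (1-Ph) * M * Q = (1-Ph) * M * ((1 - Qh) * Q)
  have hMQ : (1 - Ph) * M * Q = (1 - Ph) * M * ((1 - Qh) * Q) := by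
    have hQQ : (1 - Qh) * Q = Q - Qh * Q := by rw [Matrix.sub_mul, Matrix.one_mul]
    rw [hQQ, Matrix.mul_sub, ← Matrix.mul_assoc, h1PMQh, Matrix.zero_mul, sub_zero]
  -- spec bound chain
  have hβ : spec ((1 - Ph) * M * Q) ≤ σsh q * spec ((1 - Qh) * Q) := by
    rw [hMQ]
    calc spec ((1 - Ph) * M * ((1 - Qh) * Q))
        ≤ spec ((1 - Ph) * M) * spec ((1 - Qh) * Q) := spec_mul_le _ _
      _ ≤ σsh q * spec ((1 - Qh) * Q) :=
          mul_le_mul_of_nonneg_right hspec1PM (spec_nonneg _)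
  have hZQ : spec ((1 - Ph) * Z * Q) ≤ spec Z := by
    calc spec ((1 - Ph) * Z * Q) ≤ spec ((1 - Ph) * Z) * spec Q := spec_mul_le _ _
      _ ≤ spec ((1 - Ph) * Z) * 1 := mul_le_mul_of_nonneg_left
          (spec_projTop_le_one hV q) (spec_nonneg _)
      _ = spec ((1 - Ph) * Z) := mul_one _
      _ ≤ spec (1 - Ph) * spec Z := spec_mul_le _ _
      _ ≤ 1 * spec Z := mul_le_mul_of_nonneg_right
          (spec_one_sub_projTop_le_one hUh q) (spec_nonneg _)
      _ = spec Z := one_mul _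
  have hSQ : spec ((1 - Ph) * S * Q) ≤ σsh q * spec ((1 - Qh) * Q) + spec Z := by
    have hsplit : (1 - Ph) * S * Q = (1 - Ph) * M * Q - (1 - Ph) * Z * Q := by
      rw [hM]; rw [Matrix.mul_add, Matrix.add_mul]; abel
    calc spec ((1 - Ph) * S * Q)
        ≤ spec ((1 - Ph) * M * Q) + spec ((1 - Ph) * Z * Q) := by
          rw [hsplit]; exact spec_sub_le _ _
      _ ≤ σsh q * spec ((1 - Qh) * Q) + spec Z := add_le_add hβ hZQ
  -- α ≤ spec((1-Ph) S Q) * σ⁻¹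
  have hα : spec ((1 - Ph) * P) ≤ spec ((1 - Ph) * S * Q) * σ⁻¹ := by
    have hrw : (1 - Ph) * P = (1 - Ph) * S * Q * N := by
      symm
      simp only [Matrix.mul_assoc]
      rw [hQN, hSN]
    calc spec ((1 - Ph) * P) = spec ((1 - Ph) * S * Q * N) := by rw [hrw]
      _ ≤ spec ((1 - Ph) * S * Q) * spec N := spec_mul_le _ _
      _ ≤ spec ((1 - Ph) * S * Q) * σ⁻¹ :=
          mul_le_mul_of_nonneg_left hspecN (spec_nonneg _)
  -- combine
  have := mul_le_mul_of_nonneg_left hα (le_of_lt hσpos)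
  calc σ * spec ((1 - Ph) * P) ≤ σ * (spec ((1 - Ph) * S * Q) * σ⁻¹) := this
    _ = spec ((1 - Ph) * S * Q) := by
        field_simp
    _ ≤ σsh q * spec ((1 - Qh) * Q) + spec Z := hSQ

end Stmt14

namespace Stmt14
variable {m n : ℕ}

lemma dot_mulVec_eq_zero {X Y : Matrix (Fin m) (Fin n) ℝ} (h : Yᵀ * X = 0)
    (v w : Fin n → ℝ) : (X *ᵥ v) ⬝ᵥ (Y *ᵥ w) = 0 := by
  rw [Matrix.dotProduct_mulVec]
  have h1 : (X *ᵥ v) ᵥ* Y = (Yᵀ * X) *ᵥ v := by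
    rw [← Matrix.mulVec_transpose, Matrix.mulVec_mulVec]
  rw [h1, h, Matrix.zero_mulVec, zero_dotProduct]

lemma norm2_sub_sq_of_orth {u w : Fin m → ℝ} (h : u ⬝ᵥ w = 0) :
    norm2 (u - w) ^ 2 = norm2 u ^ 2 + norm2 w ^ 2 := by
  rw [norm2_sq, norm2_sq, norm2_sq]
  have hexp : ∀ i, (u i - w i) ^ 2 = u i ^ 2 + w i ^ 2 - 2 * (u i * w i) := by
    intro i; ring
  calc ∑ i, (u i - w i) ^ 2 = ∑ i, (u i ^ 2 + w i ^ 2 - 2 * (u i * w i)) :=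
        Finset.sum_congr rfl fun i _ => hexp i
    _ = (∑ i, u i ^ 2) + (∑ i, w i ^ 2) - 2 * ∑ i, u i * w i := by
        rw [Finset.sum_sub_distrib, Finset.sum_add_distrib, Finset.mul_sum]
    _ = (∑ i, u i ^ 2) + (∑ i, w i ^ 2) := by
        have : ∑ i, u i * w i = 0 := h
        rw [this, mul_zero, sub_zero]

lemma norm2_add_sq_of_orth {u w : Fin m → ℝ} (h : u ⬝ᵥ w = 0) :
    norm2 (u + w) ^ 2 = norm2 u ^ 2 + norm2 w ^ 2 := by
  have h' : u ⬝ᵥ (-w) = 0 := by rw [dotProduct_neg, h, neg_zero]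
  have := norm2_sub_sq_of_orth h'
  rw [sub_neg_eq_add] at this
  rw [this]
  congr 1
  unfold norm2
  congr 1
  refine congrArg Real.sqrt (Finset.sum_congr rfl fun i _ => ?_)
  rw [Pi.neg_apply, neg_sq]

end Stmt14

namespace Stmt14

/-- `‖P̂ - P‖ ≤ max ‖(1-P̂)P‖ ‖P̂(1-P)‖` for orthogonal projections. -/
lemma spec_proj_diff_le {m : ℕ} {P Ph : Matrix (Fin m) (Fin m) ℝ}
    (hP : Pᵀ = P) (hPh : Phᵀ = Ph) (hP2 : P * P = P) (hPh2 : Ph * Ph = Ph) :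
    spec (Ph - P) ≤ max (spec ((1 - Ph) * P)) (spec (Ph * (1 - P))) := by
  set a := spec ((1 - Ph) * P) with ha
  set b := spec (Ph * (1 - P)) with hb
  set K := max a b with hK
  have hK0 : 0 ≤ K := le_trans (spec_nonneg _) (le_max_left _ _)
  apply spec_le_bound hK0
  intro v
  have hid : Ph - P = Ph * (1 - P) - (1 - Ph) * P := by
    rw [Matrix.mul_sub, Matrix.mul_one, Matrix.sub_mul, Matrix.one_mul]
    abel
  have horth : ((Ph * (1 - P)) *ᵥ v) ⬝ᵥ (((1 - Ph) * P) *ᵥ v) = 0 := by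
    apply dot_mulVec_eq_zero
    have hT : ((1 - Ph) * P)ᵀ = P * (1 - Ph) := by
      rw [Matrix.transpose_mul, Matrix.transpose_sub, Matrix.transpose_one, hP, hPh]
    rw [hT]
    have hz : (1 - Ph) * Ph = 0 := by
      rw [Matrix.sub_mul, Matrix.one_mul, hPh2, sub_self]
    calc P * (1 - Ph) * (Ph * (1 - P)) = P * ((1 - Ph) * Ph) * (1 - P) := by
          simp only [Matrix.mul_assoc]
      _ = 0 := by rw [hz, Matrix.mul_zero, Matrix.zero_mul]
  have hsq : norm2 ((Ph - P) *ᵥ v) ^ 2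
      = norm2 ((Ph * (1 - P)) *ᵥ v) ^ 2 + norm2 (((1 - Ph) * P) *ᵥ v) ^ 2 := by
    rw [hid, Matrix.sub_mulVec]
    exact norm2_sub_sq_of_orth horth
  have hb1 : norm2 ((Ph * (1 - P)) *ᵥ v) ≤ b * norm2 ((1 - P) *ᵥ v) := by
    have hidem : (1 - P) * (1 - P) = 1 - P := by
      rw [Matrix.sub_mul, Matrix.one_mul, Matrix.mul_sub, Matrix.mul_one, hP2, sub_self,
        sub_zero]
    have : (Ph * (1 - P)) *ᵥ v = (Ph * (1 - P)) *ᵥ ((1 - P) *ᵥ v) := by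
      rw [Matrix.mulVec_mulVec, Matrix.mul_assoc, hidem]
    rw [this]
    exact norm2_mulVec_le _ _
  have ha1 : norm2 (((1 - Ph) * P) *ᵥ v) ≤ a * norm2 (P *ᵥ v) := by
    have : ((1 - Ph) * P) *ᵥ v = ((1 - Ph) * P) *ᵥ (P *ᵥ v) := by
      rw [Matrix.mulVec_mulVec, Matrix.mul_assoc, hP2]
    rw [this]
    exact norm2_mulVec_le _ _
  have hpyth : norm2 (P *ᵥ v) ^ 2 + norm2 ((1 - P) *ᵥ v) ^ 2 = norm2 v ^ 2 := by
    have horth2 : (P *ᵥ v) ⬝ᵥ ((1 - P) *ᵥ v) = 0 := by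
      apply dot_mulVec_eq_zero
      rw [Matrix.transpose_sub, Matrix.transpose_one, hP, Matrix.sub_mul, Matrix.one_mul, hP2,
        sub_self]
    have hadd : P *ᵥ v + (1 - P) *ᵥ v = v := by
      rw [← Matrix.add_mulVec]
      have : P + (1 - P) = 1 := by abel
      rw [this, Matrix.one_mulVec]
    calc norm2 (P *ᵥ v) ^ 2 + norm2 ((1 - P) *ᵥ v) ^ 2
        = norm2 (P *ᵥ v + (1 - P) *ᵥ v) ^ 2 := (norm2_add_sq_of_orth horth2).symm
      _ = norm2 v ^ 2 := by rw [hadd]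
  have hfin : norm2 ((Ph - P) *ᵥ v) ^ 2 ≤ (K * norm2 v) ^ 2 := by
    have e1 : norm2 ((Ph * (1 - P)) *ᵥ v) ^ 2 ≤ K ^ 2 * norm2 ((1 - P) *ᵥ v) ^ 2 := by
      calc norm2 ((Ph * (1 - P)) *ᵥ v) ^ 2 ≤ (b * norm2 ((1 - P) *ᵥ v)) ^ 2 :=
            pow_le_pow_left₀ (norm2_nonneg _) hb1 2
        _ ≤ (K * norm2 ((1 - P) *ᵥ v)) ^ 2 := by
            apply pow_le_pow_left₀ (mul_nonneg (spec_nonneg _) (norm2_nonneg _))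
            exact mul_le_mul_of_nonneg_right (le_max_right _ _) (norm2_nonneg _)
        _ = K ^ 2 * norm2 ((1 - P) *ᵥ v) ^ 2 := by ring
    have e2 : norm2 (((1 - Ph) * P) *ᵥ v) ^ 2 ≤ K ^ 2 * norm2 (P *ᵥ v) ^ 2 := by
      calc norm2 (((1 - Ph) * P) *ᵥ v) ^ 2 ≤ (a * norm2 (P *ᵥ v)) ^ 2 :=
            pow_le_pow_left₀ (norm2_nonneg _) ha1 2
        _ ≤ (K * norm2 (P *ᵥ v)) ^ 2 := by
            apply pow_le_pow_left₀ (mul_nonneg (spec_nonneg _) (norm2_nonneg _))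
            exact mul_le_mul_of_nonneg_right (le_max_left _ _) (norm2_nonneg _)
        _ = K ^ 2 * norm2 (P *ᵥ v) ^ 2 := by ring
    calc norm2 ((Ph - P) *ᵥ v) ^ 2
        = norm2 ((Ph * (1 - P)) *ᵥ v) ^ 2 + norm2 (((1 - Ph) * P) *ᵥ v) ^ 2 := hsq
      _ ≤ K ^ 2 * norm2 ((1 - P) *ᵥ v) ^ 2 + K ^ 2 * norm2 (P *ᵥ v) ^ 2 := add_le_add e1 e2
      _ = K ^ 2 * (norm2 (P *ᵥ v) ^ 2 + norm2 ((1 - P) *ᵥ v) ^ 2) := by ring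
      _ = K ^ 2 * norm2 v ^ 2 := by rw [hpyth]
      _ = (K * norm2 v) ^ 2 := by ring
  calc norm2 ((Ph - P) *ᵥ v) = Real.sqrt (norm2 ((Ph - P) *ᵥ v) ^ 2) :=
        (Real.sqrt_sq (norm2_nonneg _)).symm
    _ ≤ Real.sqrt ((K * norm2 v) ^ 2) := Real.sqrt_le_sqrt hfin
    _ = K * norm2 v := Real.sqrt_sq (mul_nonneg hK0 (norm2_nonneg _))

end Stmt14

namespace Stmt14

lemma projTop_all {m q : ℕ} {U : Matrix (Fin m) (Fin m) ℝ} (hU : Uᵀ * U = 1) (hq : m ≤ q) :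
    projTop m q U = 1 := by
  rw [projTop_eq]
  have h : diagMat m m (fun k => if k < q then (1:ℝ) else 0) = 1 := by
    rw [one_eq_diagMat]
    apply diagMat_ext
    intro t htm _
    rw [if_pos (by omega)]
  rw [h, Matrix.mul_one, mul_eq_one_comm.mp hU]

lemma pair_bound {s0 s1 x y z d : ℝ} (hx0 : 0 ≤ x) (hy0 : 0 ≤ y)
    (h1 : s0 * x ≤ s1 * y + z) (h2 : s0 * y ≤ s1 * x + z)
    (hd : 0 < d) (hds : d ≤ s0 - s1) (hs1 : 0 ≤ s1) : x ≤ z / d := by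
  rcases le_total x y with h | h
  · have hy : d * y ≤ z := by nlinarith
    have : y ≤ z / d := (le_div_iff₀ hd).mpr (by linarith)
    linarith
  · have hx : d * x ≤ z := by nlinarith
    exact (le_div_iff₀ hd).mpr (by linarith)



/-- Wedin `sin Θ` + Weyl: if `(σ_q(S) − σ_{q+1}(S))/‖Z‖ ≥ r > 1`,
then for the projections `P_U`, `P̂_U` onto the spans of top-`q` left singular vectors
of `S` and of `M = S + Z`,
`‖P̂_U − P_U‖ ≤ ‖Z‖/(σ_q(S) − σ_{q+1}(S) − ‖Z‖) ≤ 1/(r−1)`. -/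
theorem projection_perturbation
    (m n : ℕ) (S Z M : Matrix (Fin m) (Fin n) ℝ) (hM : M = S + Z)
    (q : ℕ) (hq1 : 1 ≤ q) (hq2 : q ≤ S.rank)
    (r : ℝ) (hr : 1 < r)
    (hgap : r ≤ (singVal S q - singVal S (q + 1)) / spec Z)
    -- an SVD of the signal matrix `S`
    (U : Matrix (Fin m) (Fin m) ℝ) (V : Matrix (Fin n) (Fin n) ℝ) (σs : ℕ → ℝ)
    (hU : Uᵀ * U = 1) (hV : Vᵀ * V = 1)
    (hmono : ∀ a b : ℕ, a ≤ b → σs b ≤ σs a) (hnn : ∀ a, 0 ≤ σs a)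
    (hSVD : S = U * diagMat m n σs * Vᵀ)
    -- an SVD of the perturbed matrix `M` (any choice of top-`q` left singular vectors)
    (Uh : Matrix (Fin m) (Fin m) ℝ) (Vh : Matrix (Fin n) (Fin n) ℝ) (σsh : ℕ → ℝ)
    (hUh : Uhᵀ * Uh = 1) (hVh : Vhᵀ * Vh = 1)
    (hmonoh : ∀ a b : ℕ, a ≤ b → σsh b ≤ σsh a) (hnnh : ∀ a, 0 ≤ σsh a)
    (hSVDh : M = Uh * diagMat m n σsh * Vhᵀ) :
    spec (projTop m q Uh - projTop m q U) ≤
        spec Z / (singVal S q - singVal S (q + 1) - spec Z) ∧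
      spec Z / (singVal S q - singVal S (q + 1) - spec Z) ≤ 1 / (r - 1) := by
  set z := spec Z with hzdef
  set g := singVal S q - singVal S (q + 1) with hgdef
  have hz0 : 0 ≤ z := spec_nonneg Z
  have hzpos : 0 < z := by
    rcases lt_or_eq_of_le hz0 with h | h
    · exact h
    · exfalso
      rw [hgdef] at hgap
      rw [← h, div_zero] at hgap
      linarith
  have hgz : r * z ≤ g := (le_div_iff₀ hzpos).mp hgap
  have hgzpos : 0 < g - z := by nlinarith
  have htarget2 : z / (g - z) ≤ 1 / (r - 1) := by
    rw [div_le_div_iff₀ hgzpos (by linarith : (0:ℝ) < r - 1)]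
    nlinarith
  refine ⟨?_, htarget2⟩
  -- bounds on q
  have hqn : q ≤ n := le_trans hq2 (le_trans (Matrix.rank_le_card_width S)
    (le_of_eq (Fintype.card_fin n)))
  have hqm : q ≤ m := le_trans hq2 (Matrix.rank_le_height S)
  by_cases hmq : m ≤ q
  · -- trivial case : both projections are the identity
    rw [projTop_all hUh hmq, projTop_all hU hmq, sub_self, spec_zero]
    exact div_nonneg hz0 (le_of_lt hgzpos)
  push_neg at hmq
  -- notation
  have hq1' : q - 1 + 1 = q := by omega
  -- singular value comparisons
  have hsv_easy_S : singVal S q ≤ σs (q - 1) := by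
    have := singVal_le_sigma hU hV hmono hnn hSVD (q - 1)
    rwa [hq1'] at this
  have hsv_easy_M : singVal M q ≤ σsh (q - 1) := by
    have := singVal_le_sigma hUh hVh hmonoh hnnh hSVDh (q - 1)
    rwa [hq1'] at this
  have hg_le : g ≤ singVal S q := by
    have := singVal_nonneg S (q + 1)
    rw [hgdef]; linarith
  have hσpos : 0 < σs (q - 1) := by linarith
  -- Weyl: singVal S q ≤ singVal M q + z
  have hweyl : singVal S q ≤ singVal M q + z := by
    have hSM : M + (-Z) = S := by rw [hM]; abel
    have := singVal_pert M (-Z) (by omega : 0 < q)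
    rw [hSM, spec_neg] at this
    exact this
  have hMq_ge : singVal M q ≥ singVal S q - z := by linarith
  have hsv_hard_M1 : singVal M q ≤ σsh (q - 1) := hsv_easy_M
  -- hard EYM for M at q-1 : σsh (q-1) ≥ singVal M q
  have hhard_M1 : singVal M q ≤ σsh (q - 1) := by
    have := sigma_le_singVal hUh hVh hmonoh hnnh hSVDh
      (show q - 1 < m by omega) (show q - 1 < n by omega)
    rwa [hq1'] at this
  have hσshpos : 0 < σsh (q - 1) := by linarith
  -- projections
  set P := projTop m q U with hPdef
  set Ph := projTop m q Uh with hPhdef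
  -- swapped SVD hypothesis : S = M + (-Z)
  have hMS : S = M + (-Z) := by rw [hM]; abel
  -- transposed SVDs
  have hSVDt : Sᵀ = V * diagMat n m σs * Uᵀ := by
    rw [hSVD, Matrix.transpose_mul, Matrix.transpose_mul, Matrix.transpose_transpose,
      diagMat_transpose, Matrix.mul_assoc]
  have hSVDht : Mᵀ = Vh * diagMat n m σsh * Uhᵀ := by
    rw [hSVDh, Matrix.transpose_mul, Matrix.transpose_mul, Matrix.transpose_transpose,
      diagMat_transpose, Matrix.mul_assoc]
  have hMt : Mᵀ = Sᵀ + Zᵀ := by rw [hM, Matrix.transpose_add]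
  have hSt : Sᵀ = Mᵀ + (-Z)ᵀ := by rw [hMS, Matrix.transpose_add]
  -- main bounds
  have halpha : spec ((1 - Ph) * P) ≤ z / (g - z) := by
    by_cases hnq : q < n
    · -- coupled system for (S, M)
      have h1 := claimA hM hU hV hmono hnn hSVD hUh hVh hmonoh hnnh hSVDh hq1 hqn hσpos
      have h2 := claimA hMt hV hU (fun a b hab => hmono a b hab) hnn hSVDt hVh hUh
        (fun a b hab => hmonoh a b hab) hnnh hSVDht hq1 hqm hσpos
      rw [spec_transpose] at h2
      have hhard_M2 : σsh q ≤ singVal M (q + 1) :=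
        sigma_le_singVal hUh hVh hmonoh hnnh hSVDh hmq hnq
      have hpert : singVal M (q + 1) ≤ singVal S (q + 1) + z := by
        have := singVal_pert S Z (by omega : 0 < q + 1)
        rw [← hM] at this
        exact this
      have hds : g - z ≤ σs (q - 1) - σsh q := by
        rw [hgdef]; linarith
      exact pair_bound (spec_nonneg _) (spec_nonneg _) h1 h2 hgzpos hds (hnnh q)
    · -- q = n : right projections are trivial
      have hqn' : n ≤ q := by omega
      have hQ1 : projTop n q V = 1 := projTop_all hV hqn'
      have hQh1 : projTop n q Vh = 1 := projTop_all hVh hqn'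
      have h1 := claimA hM hU hV hmono hnn hSVD hUh hVh hmonoh hnnh hSVDh hq1 hqn hσpos
      have hzero : spec ((1 - projTop n q Vh) * projTop n q V) = 0 := by
        rw [hQ1, hQh1, sub_self, Matrix.zero_mul, spec_zero]
      rw [hzero, mul_zero, zero_add] at h1
      have hds : g - z ≤ σs (q - 1) := by linarith
      calc spec ((1 - Ph) * P) ≤ z / σs (q - 1) := by
            rw [le_div_iff₀ hσpos]; linarith [h1, mul_comm (spec ((1 - Ph) * P)) (σs (q - 1))]
        _ ≤ z / (g - z) := by
            apply div_le_div_of_nonneg_left hz0 hgzpos hds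
  have hbeta : spec ((1 - P) * Ph) ≤ z / (g - z) := by
    by_cases hnq : q < n
    · have h1 := claimA hMS hUh hVh hmonoh hnnh hSVDh hU hV hmono hnn hSVD hq1 hqn hσshpos
      have h2 := claimA hSt hVh hUh (fun a b hab => hmonoh a b hab) hnnh hSVDht hV hU
        (fun a b hab => hmono a b hab) hnn hSVDt hq1 hqm hσshpos
      rw [spec_neg] at h1
      rw [spec_transpose, spec_neg] at h2
      have hhard_S2 : σs q ≤ singVal S (q + 1) :=
        sigma_le_singVal hU hV hmono hnn hSVD hmq hnq
      have hds : g - z ≤ σsh (q - 1) - σs q := by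
        rw [hgdef]; linarith
      exact pair_bound (spec_nonneg _) (spec_nonneg _) h1 h2 hgzpos hds (hnn q)
    · have hqn' : n ≤ q := by omega
      have hQ1 : projTop n q V = 1 := projTop_all hV hqn'
      have hQh1 : projTop n q Vh = 1 := projTop_all hVh hqn'
      have h1 := claimA hMS hUh hVh hmonoh hnnh hSVDh hU hV hmono hnn hSVD hq1 hqn hσshpos
      rw [spec_neg] at h1
      have hzero : spec ((1 - projTop n q V) * projTop n q Vh) = 0 := by
        rw [hQ1, hQh1, sub_self, Matrix.zero_mul, spec_zero]
      rw [hzero, mul_zero, zero_add] at h1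
      have hds : g - z ≤ σsh (q - 1) := by linarith
      calc spec ((1 - P) * Ph) ≤ z / σsh (q - 1) := by
            rw [le_div_iff₀ hσshpos]
            linarith [h1, mul_comm (spec ((1 - P) * Ph)) (σsh (q - 1))]
        _ ≤ z / (g - z) := by
            apply div_le_div_of_nonneg_left hz0 hgzpos hds
  -- assemble via the projection difference bound
  have hbeta' : spec (Ph * (1 - P)) ≤ z / (g - z) := by
    have ht : spec (Ph * (1 - P)) = spec ((1 - P) * Ph) := by
      rw [← spec_transpose (Ph * (1 - P)), Matrix.transpose_mul, Matrix.transpose_sub,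
        Matrix.transpose_one, hPdef, hPhdef, projTop_transpose, projTop_transpose]
    rw [ht]
    exact hbeta
  have hmain := spec_proj_diff_le (hPdef ▸ projTop_transpose q U)
    (hPhdef ▸ projTop_transpose q Uh) (hPdef ▸ projTop_idem hU q)
    (hPhdef ▸ projTop_idem hUh q)
  calc spec (Ph - P) ≤ max (spec ((1 - Ph) * P)) (spec (Ph * (1 - P))) := hmain
    _ ≤ z / (g - z) := max_le halpha hbeta'


end Stmt14
end
end
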